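/- Lu's bound: for every connected simple graph G with n vertices, |E| edges and diameter D_max, the algebraic connectivity satisfies λ₂ ≥ 2n / (2 + (n−1)n·D_max − 2|E|·D_max). -/

import Mathlib

open SimpleGraph Finset

/-- The algebraic connectivity: the second smallest eigenvalue of the Laplacian matrix. -/
noncomputable def algebraicConnectivity {n : ℕ} (G : SimpleGraph (Fin n))
    [DecidableRel G.Adj] : ℝ :=
  if h : 1 < n then
    (((G.posSemidef_lapMatrix ℝ).1.eigenvalues) ∘
      (Tuple.sort ((G.posSemidef_lapMatrix ℝ).1.eigenvalues))) ⟨1, h⟩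
  else 0

/-- A fixed system of shortest paths, one for each (ordered) pair of vertices. -/
structure ShortestPathSystem {n : ℕ} (G : SimpleGraph (Fin n)) where
  path : ∀ u v : Fin n, G.Walk u v
  isPath : ∀ u v : Fin n, (path u v).IsPath
  length_eq : ∀ u v : Fin n, (path u v).length = G.dist u v

/-- The connection-graph-stability score of an edge `e`: half the double sum over ordered
pairs of vertices of the length of the chosen shortest path, if it passes through `e`. -/
noncomputable def cgsScore {n : ℕ} {G : SimpleGraph (Fin n)} (P : ShortestPathSystem G)
    (e : Sym2 (Fin n)) : ℝ :=
  (1/2) * ∑ u : Fin n, ∑ v : Fin n,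
    (if e ∈ (P.path u v).edges then ((P.path u v).length : ℝ) else 0)

/-- The squared difference of `x` across an edge. -/
noncomputable def edgeSq {V : Type*} (x : V → ℝ) : Sym2 V → ℝ :=
  Sym2.lift ⟨fun a b => (x a - x b)^2, fun a b => by ring_nf⟩

open Matrix

variable {n : ℕ}

lemma list_sq_sum_le (l : List ℝ) : l.sum ^ 2 ≤ l.length * (l.map (fun a => a ^ 2)).sum := by
  induction l with
  | nil => simp
  | cons a l ih =>
    have hq : (0:ℝ) ≤ (l.map (fun a => a^2)).sum := by
      apply List.sum_nonneg; intro x hx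
      obtain ⟨b, _, rfl⟩ := List.mem_map.mp hx; positivity
    have hk : (0:ℝ) ≤ (l.length : ℝ) := Nat.cast_nonneg _
    simp only [List.sum_cons, List.length_cons, List.map_cons]
    push_cast
    rcases eq_or_lt_of_le hk with h0 | h0
    · have : l.sum ^ 2 ≤ 0 := by rw [← h0] at ih; linarith
      have hs : l.sum = 0 := by nlinarith [sq_nonneg l.sum]
      rw [hs, ← h0]; nlinarith
    · nlinarith [sq_nonneg ((l.length : ℝ) * a - l.sum), ih, hq, hk,
        mul_le_mul_of_nonneg_left ih hk, sq_nonneg l.sum, mul_pos h0 h0,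
        mul_le_mul_of_nonneg_left ih (le_of_lt h0)]

lemma walk_telescope {G : SimpleGraph (Fin n)} {u v : Fin n} (x : Fin n → ℝ) (p : G.Walk u v) :
    x u - x v = (p.darts.map (fun d => x d.toProd.1 - x d.toProd.2)).sum := by
  induction p with
  | nil => simp
  | @cons u b v h q ih =>
    rw [Walk.darts_cons, List.map_cons, List.sum_cons, ← ih]
    ring

lemma edgeSq_nonneg {V : Type*} (x : V → ℝ) (e : Sym2 V) : 0 ≤ edgeSq x e := by
  induction e with
  | _ a b => rw [edgeSq, Sym2.lift_mk]; positivity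

lemma edgeSq_dart {G : SimpleGraph (Fin n)} (x : Fin n → ℝ) (d : G.Dart) :
    edgeSq x d.edge = (x d.toProd.1 - x d.toProd.2)^2 := by
  rw [Dart.edge, edgeSq]
  exact congrArg _ rfl

lemma walk_edges_sum {G : SimpleGraph (Fin n)} {u v : Fin n} (x : Fin n → ℝ) (p : G.Walk u v)
    (hp : p.IsPath) :
    ∑ e : Sym2 (Fin n), (if e ∈ p.edges then edgeSq x e else 0)
      = (p.darts.map (fun d => (x d.toProd.1 - x d.toProd.2)^2)).sum := by
  classical
  simp_rw [← List.mem_toFinset]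
  rw [Finset.sum_ite_mem, Finset.univ_inter,
    List.sum_toFinset _ hp.isTrail.edges_nodup]
  rw [Walk.edges, List.map_map]
  congr 1

lemma sq_le_len_mul {G : SimpleGraph (Fin n)} {u v : Fin n} (x : Fin n → ℝ) (p : G.Walk u v)
    (hp : p.IsPath) :
    (x u - x v)^2 ≤ (p.length : ℝ) *
      ∑ e : Sym2 (Fin n), (if e ∈ p.edges then edgeSq x e else 0) := by
  rw [walk_edges_sum x p hp, walk_telescope x p]
  have h := list_sq_sum_le (p.darts.map (fun d => x d.toProd.1 - x d.toProd.2))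
  rw [List.length_map, List.map_map, Walk.length_darts] at h
  convert h using 3
  rfl

lemma lap_eq_sum_edges (G : SimpleGraph (Fin n)) [DecidableRel G.Adj] (x : Fin n → ℝ) :
    x ⬝ᵥ (G.lapMatrix ℝ *ᵥ x) = ∑ e ∈ G.edgeFinset, edgeSq x e := by
  classical
  have h1 : x ⬝ᵥ (G.lapMatrix ℝ *ᵥ x)
      = (∑ i : Fin n, ∑ j : Fin n, if G.Adj i j then (x i - x j)^2 else 0)/2 := by
    rw [← lapMatrix_toLinearMap₂', Matrix.toLinearMap₂'_apply']
  have h3 : ∑ i : Fin n, ∑ j : Fin n, (if G.Adj i j then (x i - x j)^2 else 0)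
      = ∑ d : G.Dart, (x d.toProd.1 - x d.toProd.2)^2 := by
    have hpt := Fintype.sum_prod_type
      (f := fun (p : Fin n × Fin n) => if G.Adj p.1 p.2 then (x p.1 - x p.2)^2 else 0)
    rw [← hpt, ← Finset.sum_filter]
    exact (Finset.sum_bij (fun d (_ : d ∈ (univ : Finset G.Dart)) => d.toProd)
      (fun d _ => by simp [d.adj])
      (fun d1 _ d2 _ h => Dart.toProd_injective h)
      (fun p hp => ⟨⟨p, (Finset.mem_filter.mp hp).2⟩, Finset.mem_univ _, rfl⟩)
      (fun d _ => rfl)).symm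
  have h2 : ∑ d : G.Dart, edgeSq x d.edge = ∑ e ∈ G.edgeFinset, 2 * edgeSq x e := by
    rw [← Finset.sum_fiberwise_of_maps_to (g := Dart.edge)
      (fun d _ => (mem_edgeFinset.mpr d.edge_mem)) (fun d => edgeSq x d.edge)]
    refine Finset.sum_congr rfl fun e he => ?_
    rw [Finset.sum_congr rfl (fun d hd => by rw [(Finset.mem_filter.mp hd).2]),
      Finset.sum_const]
    rw [show ({d : G.Dart | d.edge = e} : Finset _).card = 2 from
      G.dart_edge_fiber_card e (mem_edgeFinset.mp he)]
    simp [two_mul]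
  simp_rw [edgeSq_dart] at h2
  rw [h1, h3, h2, ← Finset.mul_sum]
  ring

lemma edges_of_length_one {G : SimpleGraph (Fin n)} {u v : Fin n} (p : G.Walk u v)
    (h : p.length = 1) : p.edges = [s(u, v)] := by
  cases p with
  | nil => simp at h
  | cons hadj q =>
    cases q with
    | nil => simp
    | cons h' q' => simp [Walk.length_cons] at h

lemma sum_ind_adj (G : SimpleGraph (Fin n)) [DecidableRel G.Adj] :
    ∑ u : Fin n, ∑ v : Fin n, (if G.Adj u v then (1:ℝ) else 0)
      = 2 * (G.edgeFinset.card : ℝ) := by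
  have h : ∀ u, ∑ v : Fin n, (if G.Adj u v then (1:ℝ) else 0) = (G.degree u : ℝ) :=
    fun u => (G.degree_eq_sum_if_adj u).symm
  simp_rw [h]
  rw [← Nat.cast_sum]
  rw [G.sum_degrees_eq_twice_card_edges]
  push_cast; ring

lemma sum_ind_diag :
    ∑ _u : Fin n, ∑ v : Fin n, (if _u = v then (0:ℝ) else 1)
      = (n:ℝ) * n - n := by
  have h : ∀ u : Fin n, ∑ v : Fin n, (if u = v then (0:ℝ) else 1) = (n:ℝ) - 1 := by
    intro u
    have hpt : ∀ v : Fin n, (if u = v then (0:ℝ) else 1) = 1 - (if u = v then 1 else 0) := by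
      intro v; split_ifs <;> ring
    simp_rw [hpt, Finset.sum_sub_distrib, Finset.sum_const, Finset.sum_ite_eq]
    simp
  simp_rw [h, Finset.sum_const, Finset.card_univ, Fintype.card_fin, nsmul_eq_mul]
  ring

lemma sum_ind_sym2 {G : SimpleGraph (Fin n)} [DecidableRel G.Adj] {e : Sym2 (Fin n)}
    (he : e ∈ G.edgeFinset) :
    ∑ u : Fin n, ∑ v : Fin n, (if s(u, v) = e then (1:ℝ) else 0) = 2 := by
  rw [mem_edgeFinset] at he
  induction e with
  | _ a b =>
    have hab : a ≠ b := (G.mem_edgeSet.mp he).ne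
    have hpt : ∀ u v : Fin n, (if s(u, v) = s(a, b) then (1:ℝ) else 0)
        = (if u = a ∧ v = b then (1:ℝ) else 0) + (if u = b ∧ v = a then (1:ℝ) else 0) := by
      intro u v
      simp only [Sym2.eq_iff]
      by_cases h2 : u = a ∧ v = b
      · have h3 : ¬(u = b ∧ v = a) := fun h => hab (h2.1.symm.trans h.1)
        rw [if_pos (Or.inl h2), if_pos h2, if_neg h3]; ring
      · by_cases h3 : u = b ∧ v = a
        · rw [if_pos (Or.inr h3), if_neg h2, if_pos h3]; ring
        · rw [if_neg (by tauto), if_neg h2, if_neg h3]; ring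
    simp_rw [hpt, Finset.sum_add_distrib, ite_and]
    simp
    norm_num


lemma cgs_sum_le {G : SimpleGraph (Fin n)} [DecidableRel G.Adj] (hG : G.Connected)
    (P : ShortestPathSystem G) {e : Sym2 (Fin n)} (he : e ∈ G.edgeFinset) :
    ∑ u : Fin n, ∑ v : Fin n,
        (if e ∈ (P.path u v).edges then ((P.path u v).length : ℝ) else 0)
      ≤ 2 + ((n:ℝ) * n - n - 2 * (G.edgeFinset.card : ℝ)) * (G.diam : ℝ) := by
  classical
  haveI : Nonempty (Fin n) := hG.nonempty
  have hne : G.ediam ≠ ⊤ := by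
    obtain ⟨a, b, hab⟩ := G.exists_edist_eq_ediam_of_finite
    rw [← hab]
    exact (G.edist_ne_top_iff_reachable).mpr (hG.preconnected a b)
  have hdd : ∀ u v : Fin n, (G.dist u v : ℝ) ≤ (G.diam : ℝ) :=
    fun u v => Nat.cast_le.mpr (G.dist_le_diam hne)
  have hDnn : (0:ℝ) ≤ (G.diam : ℝ) := Nat.cast_nonneg _
  have hpt : ∀ u v : Fin n,
      (if e ∈ (P.path u v).edges then ((P.path u v).length : ℝ) else 0)
        ≤ (if s(u,v) = e then (1:ℝ) else 0)
          + ((if u = v then (0:ℝ) else 1) - (if G.Adj u v then (1:ℝ) else 0)) * (G.diam : ℝ) := by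
    intro u v
    by_cases huv : u = v
    · subst huv
      have h0 : (P.path u u).length = 0 := by rw [P.length_eq]; simp
      rw [h0, if_pos rfl, if_neg (G.loopless.irrefl u)]
      split_ifs <;> push_cast <;> nlinarith [hDnn]
    · by_cases hadj : G.Adj u v
      · have hd1 : G.dist u v = 1 := (G.dist_eq_one_iff_adj).mpr hadj
        have hlen : (P.path u v).length = 1 := by rw [P.length_eq, hd1]
        have hedges : (P.path u v).edges = [s(u,v)] := edges_of_length_one _ hlen
        rw [if_neg huv, if_pos hadj, hedges, hlen]
        simp only [List.mem_singleton]
        split_ifs with h1 h2 <;>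
          first
            | (exact absurd h1.symm h2)
            | (push_cast; nlinarith [hDnn])
      · rw [if_neg huv, if_neg hadj]
        have hlen : ((P.path u v).length : ℝ) ≤ (G.diam : ℝ) := by
          rw [P.length_eq]; exact hdd u v
        split_ifs <;>
          nlinarith [hlen, Nat.cast_nonneg (α := ℝ) (P.path u v).length, hDnn]
  calc ∑ u : Fin n, ∑ v : Fin n,
        (if e ∈ (P.path u v).edges then ((P.path u v).length : ℝ) else 0)
      ≤ ∑ u : Fin n, ∑ v : Fin n, ((if s(u,v) = e then (1:ℝ) else 0)
          + ((if u = v then (0:ℝ) else 1) - (if G.Adj u v then (1:ℝ) else 0)) * (G.diam : ℝ)) := by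
        apply Finset.sum_le_sum; intro u _
        apply Finset.sum_le_sum; intro v _
        exact hpt u v
    _ = 2 + ((n:ℝ) * n - n - 2 * (G.edgeFinset.card : ℝ)) * (G.diam : ℝ) := by
        simp_rw [Finset.sum_add_distrib, ← Finset.sum_mul, Finset.sum_sub_distrib]
        rw [sum_ind_sym2 he, sum_ind_diag, sum_ind_adj]

lemma key_ineq (G : SimpleGraph (Fin n)) [DecidableRel G.Adj] (hG : G.Connected)
    (x : Fin n → ℝ) (hx : ∑ i, x i = 0) :
    2 * (n:ℝ) * (∑ i, x i ^ 2) ≤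
      (2 + ((n:ℝ) - 1) * (n:ℝ) * (G.diam : ℝ)
          - 2 * (G.edgeFinset.card : ℝ) * (G.diam : ℝ)) * (x ⬝ᵥ (G.lapMatrix ℝ *ᵥ x)) := by
  classical
  set D : ℝ := (G.diam : ℝ) with hD
  set E : ℝ := (G.edgeFinset.card : ℝ) with hE
  -- shortest path system
  let P : ShortestPathSystem G :=
    { path := fun u v => (hG.exists_path_of_dist u v).choose
      isPath := fun u v => (hG.exists_path_of_dist u v).choose_spec.1
      length_eq := fun u v => (hG.exists_path_of_dist u v).choose_spec.2 }
  have hA : ∑ u : Fin n, ∑ v : Fin n, (x u - x v)^2 = 2 * (n:ℝ) * ∑ i, x i ^ 2 := by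
    have expand : ∀ u v : Fin n, (x u - x v)^2 = x u^2 - 2*x u*x v + x v^2 := by
      intro u v; ring
    simp_rw [expand, Finset.sum_add_distrib, Finset.sum_sub_distrib, Finset.sum_const,
      Finset.card_univ, Fintype.card_fin, ← Finset.mul_sum, hx, ← Finset.sum_mul,
      nsmul_eq_mul]
    rw [← Finset.mul_sum]
    ring
  have hB : ∑ u : Fin n, ∑ v : Fin n, (x u - x v)^2
      ≤ ∑ e : Sym2 (Fin n), edgeSq x e *
          (∑ u : Fin n, ∑ v : Fin n,
            (if e ∈ (P.path u v).edges then ((P.path u v).length : ℝ) else 0)) := by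
    have step : ∀ u v : Fin n, (x u - x v)^2 ≤
        ∑ e : Sym2 (Fin n), edgeSq x e *
          (if e ∈ (P.path u v).edges then ((P.path u v).length : ℝ) else 0) := by
      intro u v
      have h := sq_le_len_mul x (P.path u v) (P.isPath u v)
      rw [Finset.mul_sum] at h
      refine h.trans_eq (Finset.sum_congr rfl fun e _ => ?_)
      split_ifs <;> ring
    calc ∑ u : Fin n, ∑ v : Fin n, (x u - x v)^2
        ≤ ∑ u : Fin n, ∑ v : Fin n, ∑ e : Sym2 (Fin n), edgeSq x e *
            (if e ∈ (P.path u v).edges then ((P.path u v).length : ℝ) else 0) := by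
          apply Finset.sum_le_sum; intro u _
          apply Finset.sum_le_sum; intro v _
          exact step u v
      _ = ∑ u : Fin n, ∑ e : Sym2 (Fin n), ∑ v : Fin n, edgeSq x e *
            (if e ∈ (P.path u v).edges then ((P.path u v).length : ℝ) else 0) :=
          Finset.sum_congr rfl fun u _ => Finset.sum_comm
      _ = ∑ e : Sym2 (Fin n), ∑ u : Fin n, ∑ v : Fin n, edgeSq x e *
            (if e ∈ (P.path u v).edges then ((P.path u v).length : ℝ) else 0) :=
          Finset.sum_comm
      _ = ∑ e : Sym2 (Fin n), edgeSq x e *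
            (∑ u : Fin n, ∑ v : Fin n,
              (if e ∈ (P.path u v).edges then ((P.path u v).length : ℝ) else 0)) := by
          simp_rw [Finset.mul_sum]
  set F : Sym2 (Fin n) → ℝ := fun e => ∑ u : Fin n, ∑ v : Fin n,
      (if e ∈ (P.path u v).edges then ((P.path u v).length : ℝ) else 0) with hF
  have hC : ∑ e : Sym2 (Fin n), edgeSq x e * F e
      = ∑ e ∈ G.edgeFinset, edgeSq x e * F e := by
    symm
    apply Finset.sum_subset (Finset.subset_univ _)
    intro e _ hnot
    have hF0 : F e = 0 := by
      rw [hF]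
      apply Finset.sum_eq_zero; intro u _
      apply Finset.sum_eq_zero; intro v _
      rw [if_neg]
      intro hmem
      exact hnot (mem_edgeFinset.mpr ((P.path u v).edges_subset_edgeSet hmem))
    rw [hF0, mul_zero]
  have hDb : ∑ e ∈ G.edgeFinset, edgeSq x e * F e
      ≤ ∑ e ∈ G.edgeFinset, edgeSq x e *
          (2 + ((n:ℝ) * n - n - 2 * E) * D) :=
    Finset.sum_le_sum fun e he =>
      mul_le_mul_of_nonneg_left (cgs_sum_le hG P he) (edgeSq_nonneg x e)
  have hLap : ∑ e ∈ G.edgeFinset, edgeSq x e * (2 + ((n:ℝ) * n - n - 2 * E) * D)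
      = (2 + ((n:ℝ) * n - n - 2 * E) * D) * (x ⬝ᵥ (G.lapMatrix ℝ *ᵥ x)) := by
    rw [← Finset.sum_mul, lap_eq_sum_edges]
    ring
  have : 2 * (n:ℝ) * (∑ i, x i ^ 2)
      ≤ (2 + ((n:ℝ) * n - n - 2 * E) * D) * (x ⬝ᵥ (G.lapMatrix ℝ *ᵥ x)) := by
    rw [← hA]
    calc ∑ u : Fin n, ∑ v : Fin n, (x u - x v)^2
        ≤ ∑ e : Sym2 (Fin n), edgeSq x e * F e := hB
      _ = ∑ e ∈ G.edgeFinset, edgeSq x e * F e := hC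
      _ ≤ _ := hDb.trans_eq hLap
  have heq : (2 + ((n:ℝ) * n - n - 2 * E) * D)
      = (2 + ((n:ℝ) - 1) * (n:ℝ) * D - 2 * E * D) := by ring
  rw [heq] at this
  exact this
/-- Lu's lower bound: `λ₂ ≥ 2n / (2 + (n−1)n·D_max − 2|E|·D_max)`. -/
theorem lu_bound {n : ℕ} (G : SimpleGraph (Fin n)) [DecidableRel G.Adj]
    (hG : G.Connected) (hn : 2 ≤ n) :
    2 * (n : ℝ) / (2 + ((n : ℝ) - 1) * (n : ℝ) * (G.diam : ℝ)
        - 2 * (G.edgeFinset.card : ℝ) * (G.diam : ℝ)) ≤ algebraicConnectivity G := by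
  classical
  have h1n : 1 < n := hn
  set hL := (G.posSemidef_lapMatrix ℝ).1 with hLdef
  set μ := hL.eigenvalues with hμdef
  set denom : ℝ := 2 + ((n:ℝ) - 1) * (n:ℝ) * (G.diam : ℝ)
      - 2 * (G.edgeFinset.card : ℝ) * (G.diam : ℝ) with hden
  have hDnn : (0:ℝ) ≤ (G.diam : ℝ) := Nat.cast_nonneg _
  have hEle : 2 * G.edgeFinset.card ≤ n * (n - 1) := by
    have h1 := G.card_edgeFinset_le_card_choose_two
    rw [Fintype.card_fin] at h1
    have h2 : 2 * G.edgeFinset.card ≤ 2 * (n.choose 2) := by omega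
    have h3 : n.choose 2 = n * (n-1) / 2 := Nat.choose_two_right n
    have h4 : n * (n-1) / 2 * 2 ≤ n * (n-1) := Nat.div_mul_le_self _ _
    omega
  have hEleR : 2 * (G.edgeFinset.card : ℝ) ≤ ((n:ℝ) - 1) * (n:ℝ) := by
    have h5 : ((2 * G.edgeFinset.card : ℕ) : ℝ) ≤ ((n * (n-1) : ℕ) : ℝ) := Nat.cast_le.mpr hEle
    push_cast [Nat.cast_sub (by omega : 1 ≤ n)] at h5
    nlinarith
  have hdpos : (0:ℝ) < denom := by
    rw [hden]
    nlinarith [mul_nonneg hDnn (sub_nonneg.mpr hEleR)]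
  rw [algebraicConnectivity, dif_pos h1n]
  by_contra hcon
  push_neg at hcon
  simp only [Function.comp] at hcon
  set c : ℝ := 2 * (n:ℝ) / denom with hc
  set i := Tuple.sort μ ⟨0, by omega⟩ with hidef
  set j := Tuple.sort μ ⟨1, h1n⟩ with hjdef
  have hij : i ≠ j := by
    intro h
    have := (Tuple.sort μ).injective h
    simp at this
  have hμj : μ j < c := hcon
  have hμi : μ i < c := by
    have hmono := Tuple.monotone_sort μ
      (show (⟨0, by omega⟩ : Fin n) ≤ ⟨1, h1n⟩ from by simp)
    simp only [Function.comp] at hmono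
    exact lt_of_le_of_lt hmono hμj
  -- eigenvectors
  set vi : Fin n → ℝ := ⇑(hL.eigenvectorBasis i) with hvi
  set vj : Fin n → ℝ := ⇑(hL.eigenvectorBasis j) with hvj
  have horth := hL.eigenvectorBasis.orthonormal
  rw [orthonormal_iff_ite] at horth
  have hdot : ∀ k l, (⇑(hL.eigenvectorBasis k) ⬝ᵥ ⇑(hL.eigenvectorBasis l))
      = if k = l then (1:ℝ) else 0 := by
    intro k l
    have h := horth k l
    rw [PiLp.inner_apply] at h
    simpa [dotProduct, mul_comm] using h
  have hii : vi ⬝ᵥ vi = 1 := by rw [hvi, hdot]; simp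
  have hjj : vj ⬝ᵥ vj = 1 := by rw [hvj, hdot]; simp
  have hij0 : vi ⬝ᵥ vj = 0 := by rw [hvi, hvj, hdot]; simp [hij]
  -- choose coefficients
  set svi : ℝ := ∑ k, vi k with hsvi
  set svj : ℝ := ∑ k, vj k with hsvj
  obtain ⟨a, b, hab0, habs⟩ : ∃ a b : ℝ, a^2 + b^2 > 0 ∧ a * svi + b * svj = 0 := by
    by_cases h : svi = 0 ∧ svj = 0
    · exact ⟨1, 0, by norm_num, by rw [h.1, h.2]; ring⟩
    · refine ⟨svj, -svi, ?_, by ring⟩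
      rcases not_and_or.mp h with h' | h'
      · nlinarith [sq_nonneg svj, lt_of_le_of_ne (sq_nonneg svi) (Ne.symm (pow_ne_zero 2 h'))]
      · nlinarith [sq_nonneg svi, lt_of_le_of_ne (sq_nonneg svj) (Ne.symm (pow_ne_zero 2 h'))]
  set x : Fin n → ℝ := fun k => a * vi k + b * vj k with hx
  have hsum : ∑ k, x k = 0 := by
    rw [hx]
    simp_rw [Finset.sum_add_distrib, ← Finset.mul_sum]
    rw [← hsvi, ← hsvj]; exact habs
  have hxx : x ⬝ᵥ x = a^2 + b^2 := by
    have expand : ∀ k, x k * x k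
        = a^2 * (vi k * vi k) + 2*a*b*(vi k * vj k) + b^2 * (vj k * vj k) := by
      intro k; rw [hx]; ring
    simp only [dotProduct]
    simp_rw [expand, Finset.sum_add_distrib, ← Finset.mul_sum]
    have e1 : ∑ k, vi k * vi k = 1 := hii
    have e2 : ∑ k, vi k * vj k = 0 := hij0
    have e3 : ∑ k, vj k * vj k = 1 := hjj
    rw [e1, e2, e3]; ring
  have hLx : G.lapMatrix ℝ *ᵥ x = fun k => a * (μ i * vi k) + b * (μ j * vj k) := by
    have hxe : x = a • vi + b • vj := by funext k; simp [hx]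
    rw [hxe, mulVec_add, mulVec_smul, mulVec_smul, hvi, hvj,
      hL.mulVec_eigenvectorBasis, hL.mulVec_eigenvectorBasis]
    funext k
    simp [hvi, hvj, hμdef]
  have hxLx : x ⬝ᵥ (G.lapMatrix ℝ *ᵥ x) = a^2 * μ i + b^2 * μ j := by
    rw [hLx]
    have expand : ∀ k, x k * (a * (μ i * vi k) + b * (μ j * vj k))
        = a^2 * μ i * (vi k * vi k) + (a*b*(μ i + μ j)) * (vi k * vj k)
          + b^2 * μ j * (vj k * vj k) := by
      intro k; rw [hx]; ring
    simp only [dotProduct]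
    simp_rw [expand, Finset.sum_add_distrib, ← Finset.mul_sum]
    have e1 : ∑ k, vi k * vi k = 1 := hii
    have e2 : ∑ k, vi k * vj k = 0 := hij0
    have e3 : ∑ k, vj k * vj k = 1 := hjj
    rw [e1, e2, e3]; ring
  have hkey := key_ineq G hG x hsum
  have hx2 : ∑ k, x k ^ 2 = a^2 + b^2 := by
    rw [← hxx]; simp [dotProduct, pow_two]
  rw [hx2, hxLx, ← hden] at hkey
  have hstrict : a^2 * μ i + b^2 * μ j < c * (a^2 + b^2) := by
    have hm : 0 < min (c - μ i) (c - μ j) := lt_min (by linarith) (by linarith)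
    nlinarith [mul_le_mul_of_nonneg_left (min_le_left (c - μ i) (c - μ j)) (sq_nonneg a),
      mul_le_mul_of_nonneg_left (min_le_right (c - μ i) (c - μ j)) (sq_nonneg b),
      mul_pos hab0 hm]
  have hdc : denom * c = 2 * (n:ℝ) := by
    rw [hc, mul_div_cancel₀ _ (ne_of_gt hdpos)]
  have : 2 * (n:ℝ) * (a^2 + b^2) < 2 * (n:ℝ) * (a^2 + b^2) := by
    calc 2 * (n:ℝ) * (a^2 + b^2) ≤ denom * (a^2 * μ i + b^2 * μ j) := hkey
      _ < denom * (c * (a^2 + b^2)) := by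
          exact mul_lt_mul_of_pos_left hstrict hdpos
      _ = 2 * (n:ℝ) * (a^2 + b^2) := by rw [← mul_assoc, hdc]
  exact absurd this (lt_irrefl _)
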